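/- Let v = (v_1,…,v_k) be pairwise distinct points of (0,1)∖{t}, and let (i_1,…,i_l) be a sequence of indices in {1,…,k} that is admissible for v, with the additional property that no entry of any intermediate tuple next_{i_j,…,i_l}(v) equals t. Let v′ = (v_1,…,v_k, t) be the (k+1)-tuple obtained by adjoining a new stationary point at t; then (i_1,…,i_l) is admissible for v′. Let i be the rank of t among the entries of v′ and i′ the rank of t among the entries of the final tuple next_{i_1,…,i_l}(v′). Then T*_{k+1↘i′} · B^{(k+1)}(v′; i_1,…,i_l) = B^{(k)}(v; i_1,…,i_l) · T*_{k+1↘i} in G. (This expresses that adjoining a stationary strand at the corner point t transforms the special braid by the homomorphism φ₋ that fixes the generators T_i, z_i, y_i.) -/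

import Mathlib

noncomputable section

variable {G : Type*} [Group G]

/-- `ascProd T a n = T_a * T_{a+1} * ⋯ * T_{a+n-1}` (`n` factors, ascending). -/
def ascProd (T : ℕ → G) (a : ℕ) : ℕ → G
  | 0 => 1
  | n + 1 => ascProd T a n * T (a + n)

/-- `descProd T b n = T_{b+n-1} * ⋯ * T_b` (`n` factors, descending). -/
def descProd (T : ℕ → G) (b : ℕ) : ℕ → G
  | 0 => 1
  | n + 1 => T (b + n) * descProd T b n

/-- The ascending train `T_{a↗b}`: for `a ≤ b` it is `T_a T_{a+1} ⋯ T_{b-1}`;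
for `a > b` it is, by convention, `T*_{a↘b} = T_{a-1}⁻¹ ⋯ T_b⁻¹`. -/
def up (T : ℕ → G) (a b : ℕ) : G :=
  if a ≤ b then ascProd T a (b - a) else (ascProd T b (a - b))⁻¹

/-- The descending train `T_{a↘b}`: for `a ≥ b` it is `T_{a-1} T_{a-2} ⋯ T_b`;
for `a < b` it is, by convention, `T*_{a↗b} = T_a⁻¹ ⋯ T_{b-1}⁻¹`. -/
def down (T : ℕ → G) (a b : ℕ) : G :=
  if b ≤ a then descProd T b (a - b) else (descProd T a (b - a))⁻¹

/-- The starred ascending train `T*_{a↗b} = T_a⁻¹ ⋯ T_{b-1}⁻¹` (for `a ≤ b`),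
with the analogous convention for `a > b`. -/
def upStar (T : ℕ → G) (a b : ℕ) : G := up (fun n => (T n)⁻¹) a b

/-- The starred descending train `T*_{a↘b} = T_{a-1}⁻¹ ⋯ T_b⁻¹` (for `a ≥ b`),
with the analogous convention for `a < b`. -/
def downStar (T : ℕ → G) (a b : ℕ) : G := down (fun n => (T n)⁻¹) a b

/-- `σ_{a,b}(c) = c+1` if `a ≤ c < b`, `c−1` if `a ≥ c > b`, and `c` otherwise. -/
def sigmaShift (a b c : ℕ) : ℕ :=
  if a ≤ c ∧ c < b then c + 1 else if b < c ∧ c ≤ a then c - 1 else c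

/-- `ỹ_i := T_{i↘1} · T_{1↗k} · y_k · T*_{k↘i}`. -/
def ytilde (T y : ℕ → G) (k i : ℕ) : G :=
  down T i 1 * up T 1 k * y k * downStar T k i

/-- `next(x)`: for `x ≠ t` in `(0,1)`, `next(x) = x − t` if `x > t`,
and `next(x) = x + (1 − t)` if `x < t`. -/
noncomputable def nextPt (t x : ℝ) : ℝ := if t < x then x - t else x + (1 - t)

/-- The (1-based) rank of the entry `v i` in the increasing ordering of the entries
of the tuple `v` (the entries being pairwise distinct). -/
def rankOf {k : ℕ} (v : Fin k → ℝ) (i : Fin k) : ℕ :=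
  (Finset.univ.filter fun j => v j ≤ v i).card

/-- `next_i(v)`: replace the `i`-th entry of `v` by `next(v_i)`. -/
noncomputable def moveAt {k : ℕ} (t : ℝ) (v : Fin k → ℝ) (i : Fin k) : Fin k → ℝ :=
  Function.update v i (nextPt t (v i))

/-- The braid element `b_i(v)`: with `a` the rank of `v_i` in `v` and `a′` the rank of
`next(v_i)` in `next_i(v)`, it is `T_{a′↘a} · z_a` if `v_i < t` and
`T*_{a′↗a} · ỹ_a` if `v_i > t`. -/
noncomputable def bmove {k : ℕ} (T y z : ℕ → G) (t : ℝ) (v : Fin k → ℝ) (i : Fin k) : G :=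
  if v i < t then
    down T (rankOf (moveAt t v i) i) (rankOf v i) * z (rankOf v i)
  else
    upStar T (rankOf (moveAt t v i) i) (rankOf v i) * ytilde T y k (rankOf v i)

/-- `next_{i₁,…,i_l}(u)`: moves are applied from right to left. -/
noncomputable def nextSeq {k : ℕ} (t : ℝ) (u : Fin k → ℝ) : List (Fin k) → (Fin k → ℝ)
  | [] => u
  | i :: rest => moveAt t (nextSeq t u rest) i

/-- A sequence of indices is admissible for `u` if at every stage the entries are pairwise
distinct and the entry to be moved is distinct from `t`. -/
def AdmissibleSeq {k : ℕ} (t : ℝ) (u : Fin k → ℝ) : List (Fin k) → Prop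
  | [] => Function.Injective u
  | i :: rest => AdmissibleSeq t u rest ∧ nextSeq t u rest i ≠ t ∧
      Function.Injective (moveAt t (nextSeq t u rest) i)

/-- The special braid `B(u; i₁,…,i_l) = b_{i₁}(next_{i₂,…,i_l}(u)) ⋯ b_{i_l}(u)`. -/
noncomputable def specialBraid {k : ℕ} (T y z : ℕ → G) (t : ℝ) (u : Fin k → ℝ) :
    List (Fin k) → G
  | [] => 1
  | i :: rest => bmove T y z t (nextSeq t u rest) i * specialBraid T y z t u rest

namespace SBCP

lemma comm_head {a b w : G} (h : a * b = b * a) : a * (b * w) = b * (a * w) := by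
  rw [← mul_assoc, h, mul_assoc]

lemma braid_inv2 {x y : G} (h : x*y*x = y*x*y) : x⁻¹ * y * x = y * x * y⁻¹ := by
  have h2 := congrArg (fun g => x⁻¹ * g * y⁻¹) h
  simpa [mul_assoc] using h2.symm

lemma braid_inv3 {x y : G} (h : x*y*x = y*x*y) : y⁻¹ * x * y = x * y * x⁻¹ := by
  have h2 := congrArg (fun g => y⁻¹ * g * x⁻¹) h
  simpa [mul_assoc] using h2

lemma braid_inv1 {x y : G} (h : x*y*x = y*x*y) : y⁻¹ * x⁻¹ * y = x * y⁻¹ * x⁻¹ := by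
  have h3 := congrArg Inv.inv (braid_inv3 h)
  simpa [mul_assoc] using h3

lemma braid_inv1' {x y w : G} (h : x*y*x = y*x*y) :
    y⁻¹ * (x⁻¹ * (y * w)) = x * (y⁻¹ * (x⁻¹ * w)) := by
  have h1 := braid_inv1 h
  rw [← mul_assoc, ← mul_assoc, h1, mul_assoc, mul_assoc]

lemma braid_inv2' {x y w : G} (h : x*y*x = y*x*y) :
    x⁻¹ * (y * (x * w)) = y * (x * (y⁻¹ * w)) := by
  have h1 := braid_inv2 h
  rw [← mul_assoc, ← mul_assoc, h1, mul_assoc, mul_assoc]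

lemma braid_inv3' {x y w : G} (h : x*y*x = y*x*y) :
    y⁻¹ * (x * (y * w)) = x * (y * (x⁻¹ * w)) := by
  have h1 := braid_inv3 h
  rw [← mul_assoc, ← mul_assoc, h1, mul_assoc, mul_assoc]

lemma conj_inv' {D A B : G} (h : D * A = B * D) : D * A⁻¹ = B⁻¹ * D := by
  have h1 : A = D⁻¹ * (B * D) := by rw [← h]; group
  rw [h1]; group

lemma descProd_add (T : ℕ → G) (b m n : ℕ) :
    descProd T b (n + m) = descProd T (b + n) m * descProd T b n := by
  induction m with
  | zero => simp [descProd]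
  | succ m ih =>
      have e : n + (m + 1) = (n + m) + 1 := rfl
      rw [e, descProd, ih, descProd, ← mul_assoc]
      have e2 : b + (n + m) = b + n + m := by omega
      rw [e2]

lemma ascProd_add (T : ℕ → G) (a m n : ℕ) :
    ascProd T a (m + n) = ascProd T a m * ascProd T (a + m) n := by
  induction n with
  | zero => simp [ascProd]
  | succ n ih =>
      have e : m + (n + 1) = (m + n) + 1 := rfl
      rw [e, ascProd, ih, ascProd, mul_assoc]
      have e2 : a + (m + n) = a + m + n := by omega
      rw [e2]

lemma ascProd_head (T : ℕ → G) (a n : ℕ) :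
    ascProd T a (n + 1) = T a * ascProd T (a + 1) n := by
  have e : n + 1 = 1 + n := by omega
  rw [e, ascProd_add]
  simp [ascProd]

lemma descProd_head (T : ℕ → G) (b n : ℕ) :
    descProd T b (n + 1) = descProd T (b + 1) n * T b := by
  have e : n + 1 = 1 + n := by omega
  rw [e, descProd_add]
  simp [descProd]

lemma commute_descProd {X : G} {T : ℕ → G} {b n : ℕ}
    (h : ∀ j, b ≤ j → j < b + n → Commute X (T j)) : Commute X (descProd T b n) := by
  induction n with
  | zero => simp only [descProd]; exact Commute.one_right X
  | succ n ih =>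
      rw [descProd]
      exact (h _ (by omega) (by omega)).mul_right (ih fun j hj hj2 => h j hj (by omega))

lemma commute_ascProd {X : G} {T : ℕ → G} {b n : ℕ}
    (h : ∀ j, b ≤ j → j < b + n → Commute X (T j)) : Commute X (ascProd T b n) := by
  induction n with
  | zero => simp only [ascProd]; exact Commute.one_right X
  | succ n ih =>
      rw [ascProd]
      exact (ih fun j hj hj2 => h j hj (by omega)).mul_right (h _ (by omega) (by omega))

lemma conj_descProd {D : G} {f g : ℕ → G} {b n : ℕ}
    (h : ∀ j, b ≤ j → j < b + n → D * f (j+1) = g j * D) :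
    D * descProd f (b+1) n = descProd g b n * D := by
  induction n with
  | zero => simp [descProd]
  | succ n ih =>
      rw [descProd, descProd, ← mul_assoc]
      have e : b + 1 + n = (b + n) + 1 := by omega
      rw [e, h (b+n) (by omega) (by omega), mul_assoc, ih fun j hj hj2 => h j hj (by omega),
        ← mul_assoc]

lemma conj_ascProd {D : G} {f g : ℕ → G} {b n : ℕ}
    (h : ∀ j, b ≤ j → j < b + n → D * f (j+1) = g j * D) :
    D * ascProd f (b+1) n = ascProd g b n * D := by
  induction n with
  | zero => simp [ascProd]
  | succ n ih =>
      rw [ascProd, ascProd, ← mul_assoc, ih fun j hj hj2 => h j hj (by omega), mul_assoc]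
      have e : b + 1 + n = (b + n) + 1 := by omega
      rw [e, h (b+n) (by omega) (by omega), ← mul_assoc]

/-- Bundle of the pure braid-relations context. -/
structure BraidCtx (G : Type*) [Group G] (k : ℕ) (T : ℕ → G) : Prop where
  braid : ∀ i, 1 ≤ i → i + 2 ≤ k + 1 → T i * T (i+1) * T i = T (i+1) * T i * T (i+1)
  comm : ∀ i j, 1 ≤ i → i + 1 ≤ k + 1 → 1 ≤ j → j + 1 ≤ k + 1 →
      (i + 1 < j ∨ j + 1 < i) → T i * T j = T j * T i

def DD (T : ℕ → G) (k m : ℕ) : G := descProd (fun n => (T n)⁻¹) m (k + 1 - m)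

lemma DD_peel {T : ℕ → G} {k m : ℕ} (h : m ≤ k) :
    DD T k m = DD T k (m+1) * (T m)⁻¹ := by
  unfold DD
  have e1 : k + 1 - m = 1 + (k - m) := by omega
  have e2 : k + 1 - (m + 1) = k - m := by omega
  rw [e1, descProd_add, e2]
  simp [descProd]

lemma DD_mul_T {T : ℕ → G} {k m : ℕ} (h : m ≤ k) :
    DD T k m * T m = DD T k (m+1) := by
  rw [DD_peel h, mul_assoc]
  simp

lemma DD_mul_Tinv {T : ℕ → G} {k m : ℕ} (h : m ≤ k) :
    DD T k (m+1) * (T m)⁻¹ = DD T k m := (DD_peel h).symm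

lemma DD_cons {T : ℕ → G} {k m : ℕ} (h : m ≤ k) :
    DD T k m = (T k)⁻¹ * descProd (fun n => (T n)⁻¹) m (k - m) := by
  unfold DD
  have e1 : k + 1 - m = (k - m) + 1 := by omega
  rw [e1, descProd]
  have e2 : m + (k - m) = k := by omega
  rw [e2]

lemma BraidCtx.commute_T_DD {k : ℕ} {T : ℕ → G} (hc : BraidCtx G k T) {p m : ℕ}
    (hp : 1 ≤ p) (hpm : p + 1 < m) (hpk : p + 1 ≤ k + 1) :
    Commute (T p) (DD T k m) := by
  apply commute_descProd
  intro q hq hq2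
  have h : Commute (T p) (T q) :=
    hc.comm p q hp hpk (by omega) (by omega) (Or.inl (by omega))
  exact h.inv_right

lemma BraidCtx.DD_shift {k : ℕ} {T : ℕ → G} (hc : BraidCtx G k T) {m j : ℕ}
    (h1 : 1 ≤ m) (hmj : m ≤ j) (hjk : j + 1 ≤ k) :
    DD T k m * T (j+1) = T j * DD T k m := by
  have hsplit : DD T k m
      = descProd (fun n => (T n)⁻¹) (j+2) (k-1-j) *
        ((T (j+1))⁻¹ * ((T j)⁻¹ * descProd (fun n => (T n)⁻¹) m (j-m))) := by
    unfold DD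
    have e1 : k + 1 - m = (j - m) + (k + 1 - j) := by omega
    rw [e1, descProd_add]
    have e2 : m + (j - m) = j := by omega
    have e3 : k + 1 - j = 2 + (k - 1 - j) := by omega
    rw [e2, e3, descProd_add]
    simp [descProd, mul_assoc]
  have hBot : Commute (T (j+1)) (descProd (fun n => (T n)⁻¹) m (j-m)) := by
    apply commute_descProd
    intro p hp hp2
    have h : Commute (T (j+1)) (T p) :=
      hc.comm (j+1) p (by omega) (by omega) (by omega) (by omega) (Or.inr (by omega))
    exact h.inv_right
  have hTop : Commute (T j) (descProd (fun n => (T n)⁻¹) (j+2) (k-1-j)) := by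
    apply commute_descProd
    intro q hq hq2
    have h : Commute (T j) (T q) :=
      hc.comm j q (by omega) (by omega) (by omega) (by omega) (Or.inl (by omega))
    exact h.inv_right
  rw [hsplit]
  simp only [mul_assoc]
  rw [← hBot.eq, braid_inv1' (hc.braid j (by omega) (by omega)),
    comm_head hTop.symm.eq]

lemma BraidCtx.DD_shift_inv {k : ℕ} {T : ℕ → G} (hc : BraidCtx G k T) {m j : ℕ}
    (h1 : 1 ≤ m) (hmj : m ≤ j) (hjk : j + 1 ≤ k) :
    DD T k m * (T (j+1))⁻¹ = (T j)⁻¹ * DD T k m :=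
  conj_inv' (hc.DD_shift h1 hmj hjk)

lemma BraidCtx.DD_conj_descProd_T {k : ℕ} {T : ℕ → G} (hc : BraidCtx G k T) {m b n : ℕ}
    (h1 : 1 ≤ m) (hmb : m ≤ b) (hbn : b + n ≤ k) :
    DD T k m * descProd T (b+1) n = descProd T b n * DD T k m :=
  conj_descProd (fun j hj hj2 => hc.DD_shift h1 (le_trans hmb hj) (by omega))

lemma BraidCtx.DD_conj_descProd_Tinv {k : ℕ} {T : ℕ → G} (hc : BraidCtx G k T) {m b n : ℕ}
    (h1 : 1 ≤ m) (hmb : m ≤ b) (hbn : b + n ≤ k) :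
    DD T k m * descProd (fun n => (T n)⁻¹) (b+1) n
      = descProd (fun n => (T n)⁻¹) b n * DD T k m :=
  conj_descProd (fun j hj hj2 => hc.DD_shift_inv h1 (le_trans hmb hj) (by omega))

lemma BraidCtx.DD_conj_ascProd_Tinv {k : ℕ} {T : ℕ → G} (hc : BraidCtx G k T) {m b n : ℕ}
    (h1 : 1 ≤ m) (hmb : m ≤ b) (hbn : b + n ≤ k) :
    DD T k m * ascProd (fun n => (T n)⁻¹) (b+1) n
      = ascProd (fun n => (T n)⁻¹) b n * DD T k m :=
  conj_ascProd (fun j hj hj2 => hc.DD_shift_inv h1 (le_trans hmb hj) (by omega))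

lemma BraidCtx.DD_conj_ascProd_Tinv_inv {k : ℕ} {T : ℕ → G} (hc : BraidCtx G k T) {m b n : ℕ}
    (h1 : 1 ≤ m) (hmb : m ≤ b) (hbn : b + n ≤ k) :
    DD T k m * (ascProd (fun n => (T n)⁻¹) (b+1) n)⁻¹
      = (ascProd (fun n => (T n)⁻¹) b n)⁻¹ * DD T k m :=
  conj_inv' (hc.DD_conj_ascProd_Tinv h1 hmb hbn)

lemma BraidCtx.ZL {k : ℕ} {T : ℕ → G} (hc : BraidCtx G k T) {mm : ℕ} (h1 : 1 ≤ mm) :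
    ∀ n, mm + n ≤ k →
      DD T k (mm+1) * ((T mm)⁻¹ * descProd T mm (n+1))
        = descProd T mm n * DD T k (mm+1) := by
  intro n
  induction n with
  | zero =>
      intro h
      simp [descProd]
  | succ p ih =>
      intro h
      rcases Nat.eq_zero_or_pos p with hp | hp
      · subst hp
        have hd2 : descProd T mm 2 = T (mm+1) * (T mm * 1) := by simp [descProd]
        rw [hd2, braid_inv2' (hc.braid mm h1 (by omega)), ← mul_assoc,
          DD_mul_T (by omega : mm + 1 ≤ k)]
        have hcm : Commute (T mm) (DD T k (mm+2)) :=
          hc.commute_T_DD (by omega) (by omega) (by omega)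
        rw [comm_head hcm.symm.eq, mul_one, ← mul_assoc, mul_assoc]
        have e2 : mm + 2 = mm + 1 + 1 := by omega
        rw [e2, DD_mul_Tinv (by omega : mm + 1 ≤ k)]
        simp [descProd, mul_assoc]
      · have e : descProd T mm (p + 1 + 1) = T (mm + (p + 1)) * descProd T mm (p+1) := rfl
        have hcm : Commute ((T mm)⁻¹) (T (mm + (p+1))) := by
          have h2 : Commute (T mm) (T (mm + (p+1))) :=
            hc.comm mm (mm + (p+1)) h1 (by omega) (by omega) (by omega) (Or.inl (by omega))
          exact h2.inv_left
        rw [e, comm_head hcm.eq, ← mul_assoc]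
        have e2 : mm + (p + 1) = (mm + p) + 1 := by omega
        rw [e2, hc.DD_shift (by omega) (by omega) (by omega), mul_assoc,
          ih (by omega), ← mul_assoc]
        have e3 : descProd T mm (p+1) = T (mm + p) * descProd T mm p := rfl
        rw [e3]

lemma BraidCtx.case_b {k : ℕ} {T : ℕ → G} (hc : BraidCtx G k T) (z : ℕ → G)
    (hzT : ∀ i j, 1 ≤ i → i ≤ k + 1 → 1 ≤ j → j + 1 ≤ k + 1 → i ≠ j → i ≠ j + 1 →
      z i * T j = T j * z i)
    {a mm a' : ℕ} (ha : 1 ≤ a) (ham : a ≤ mm) (hma : mm ≤ a') (hak : a' ≤ k) :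
    DD T k mm * (descProd T a (a' + 1 - a) * z a)
      = (descProd T a (a' - a) * z a) * DD T k (mm+1) := by
  have hsplit : descProd T a (a' + 1 - a)
      = descProd T mm ((a' - mm) + 1) * descProd T a (mm - a) := by
    have e1 : a' + 1 - a = (mm - a) + ((a' - mm) + 1) := by omega
    rw [e1, descProd_add]
    have e2 : a + (mm - a) = mm := by omega
    rw [e2]
  have hLow : Commute (DD T k (mm+1)) (descProd T a (mm - a)) := by
    apply commute_descProd
    intro p hp hp2
    exact (hc.commute_T_DD (by omega) (by omega) (by omega)).symm
  have hz : Commute (DD T k (mm+1)) (z a) := by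
    refine (commute_descProd ?_).symm
    intro q hq hq2
    have h : Commute (z a) (T q) := hzT a q (by omega) (by omega) (by omega) (by omega)
      (by omega) (by omega)
    exact h.inv_right
  have hZL := hc.ZL (by omega : 1 ≤ mm) (a' - mm) (by omega)
  have e4 : descProd T mm (a' - mm) * descProd T a (mm - a) = descProd T a (a' - a) := by
    have e5 : a' - a = (mm - a) + (a' - mm) := by omega
    rw [e5, descProd_add]
    have e6 : a + (mm - a) = mm := by omega
    rw [e6]
  rw [hsplit, DD_peel (by omega : mm ≤ k)]
  calc DD T k (mm+1) * (T mm)⁻¹ *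
        (descProd T mm (a' - mm + 1) * descProd T a (mm - a) * z a)
      = (DD T k (mm+1) * ((T mm)⁻¹ * descProd T mm (a' - mm + 1))) *
          (descProd T a (mm - a) * z a) := by simp only [mul_assoc]
    _ = (descProd T mm (a' - mm) * DD T k (mm+1)) * (descProd T a (mm - a) * z a) := by
          rw [hZL]
    _ = descProd T mm (a' - mm) * (descProd T a (mm - a) * (DD T k (mm+1) * z a)) := by
          simp only [mul_assoc]; rw [comm_head hLow.eq]
    _ = descProd T mm (a' - mm) * (descProd T a (mm - a) * (z a * DD T k (mm+1))) := by
          rw [hz.eq]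
    _ = (descProd T mm (a' - mm) * descProd T a (mm - a)) * (z a * DD T k (mm+1)) := by
          simp only [mul_assoc]
    _ = descProd T a (a' - a) * z a * DD T k (mm+1) := by rw [e4, mul_assoc]

lemma down_eq {T : ℕ → G} {a b : ℕ} (h : b ≤ a) : down T a b = descProd T b (a - b) := by
  unfold down; rw [if_pos h]

lemma up_eq {T : ℕ → G} {a b : ℕ} (h : a ≤ b) : up T a b = ascProd T a (b - a) := by
  unfold up; rw [if_pos h]

lemma up_eq' {T : ℕ → G} {a b : ℕ} (h : ¬ a ≤ b) : up T a b = (ascProd T b (a - b))⁻¹ := by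
  unfold up; rw [if_neg h]

lemma downStar_eq {T : ℕ → G} {a b : ℕ} (h : b ≤ a) :
    downStar T a b = descProd (fun n => (T n)⁻¹) b (a - b) := by
  unfold downStar; exact down_eq h

lemma downStar_eq_DD {T : ℕ → G} {k m : ℕ} (h : m ≤ k + 1) :
    downStar T (k+1) m = DD T k m := downStar_eq h

lemma BraidCtx.Qlem {k : ℕ} {T : ℕ → G} (hc : BraidCtx G k T) {m : ℕ} (h1 : 1 ≤ m) :
    ∀ n, m + n ≤ k →
      DD T k m * descProd T m (n+1) = descProd T m n * DD T k (m+1) := by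
  intro n
  induction n with
  | zero =>
      intro h
      have : descProd T m 1 = T m * 1 := by simp [descProd]
      rw [this, ← mul_assoc, mul_one, DD_mul_T (by omega : m ≤ k)]
      simp [descProd]
  | succ p ih =>
      intro h
      have e : descProd T m (p + 1 + 1) = T (m + (p + 1)) * descProd T m (p+1) := rfl
      have e2 : m + (p + 1) = (m + p) + 1 := by omega
      rw [e, e2, ← mul_assoc, hc.DD_shift h1 (by omega) (by omega), mul_assoc,
        ih (by omega), ← mul_assoc]
      have e3 : descProd T m (p+1) = T (m + p) * descProd T m p := rfl
      rw [e3]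

lemma BraidCtx.d1 {k : ℕ} {T : ℕ → G} (hc : BraidCtx G k T) {m a : ℕ}
    (h1 : 1 ≤ m) (hma : m ≤ a) (hak : a ≤ k) :
    DD T k m * descProd T 1 a = descProd T 1 (a-1) * DD T k (m+1) := by
  have hsplit := descProd_add T 1 ((a - m) + 1) (m - 1)
  rw [show (m-1) + ((a-m)+1) = a by omega, show 1 + (m-1) = m by omega] at hsplit
  have hlow : Commute (DD T k (m+1)) (descProd T 1 (m-1)) := by
    apply commute_descProd
    intro p hp hp2
    exact (hc.commute_T_DD (by omega) (by omega) (by omega)).symm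
  have hQ := hc.Qlem h1 (a - m) (by omega)
  rw [hsplit, ← mul_assoc, hQ, mul_assoc, hlow.eq, ← mul_assoc]
  have e4 := descProd_add T 1 (a - m) (m - 1)
  rw [show (m-1) + (a-m) = a - 1 by omega, show 1 + (m-1) = m by omega] at e4
  rw [← e4]

lemma BraidCtx.CC {k : ℕ} {T : ℕ → G} (hc : BraidCtx G k T) {m : ℕ} (h1 : 1 ≤ m) :
    ∀ n, m + n ≤ k →
      descProd (fun n => (T n)⁻¹) (m+1) n * ascProd T m (n+1)
        = ascProd T m (n+1) * descProd (fun n => (T n)⁻¹) m n := by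
  intro n
  induction n with
  | zero => intro h; simp [descProd]
  | succ p ih =>
      intro h
      have e1 : descProd (fun n => (T n)⁻¹) (m+1) (p+1)
          = (T (m+1+p))⁻¹ * descProd (fun n => (T n)⁻¹) (m+1) p := rfl
      have e2 : ascProd T m (p+1+1) = ascProd T m (p+1) * T (m + (p+1)) := rfl
      have hcm1 : Commute (T (m + (p+1))) (descProd (fun n => (T n)⁻¹) m p) := by
        apply commute_descProd
        intro q hq hq2
        have hco : Commute (T (m+(p+1))) (T q) :=
          hc.comm (m+(p+1)) q (by omega) (by omega) (by omega) (by omega)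
            (Or.inr (by omega))
        exact hco.inv_right
      have hcm2 : Commute ((T (m + (p+1)))⁻¹) (ascProd T m p) := by
        apply commute_ascProd
        intro q hq hq2
        have hco : Commute (T (m+(p+1))) (T q) :=
          hc.comm (m+(p+1)) q (by omega) (by omega) (by omega) (by omega)
            (Or.inr (by omega))
        exact hco.inv_left
      have e3 : m + 1 + p = m + (p + 1) := by omega
      calc descProd (fun n => (T n)⁻¹) (m+1) (p+1) * ascProd T m (p+1+1)
          = (T (m+(p+1)))⁻¹ *
              ((descProd (fun n => (T n)⁻¹) (m+1) p * ascProd T m (p+1)) * T (m+(p+1))) := by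
            rw [e1, e2, e3]; simp only [mul_assoc]
        _ = (T (m+(p+1)))⁻¹ *
              ((ascProd T m (p+1) * descProd (fun n => (T n)⁻¹) m p) * T (m+(p+1))) := by
            rw [ih (by omega)]
        _ = (T (m+(p+1)))⁻¹ * (ascProd T m (p+1) *
              (T (m+(p+1)) * descProd (fun n => (T n)⁻¹) m p)) := by
            simp only [mul_assoc]; rw [hcm1.symm.eq]
        _ = ((T (m+(p+1)))⁻¹ * (ascProd T m p * (T (m+p) *
              (T (m+(p+1)) * descProd (fun n => (T n)⁻¹) m p)))) := by
            have e4 : ascProd T m (p+1) = ascProd T m p * T (m+p) := rfl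
            rw [e4]; simp only [mul_assoc]
        _ = ascProd T m p * ((T (m+(p+1)))⁻¹ * (T (m+p) *
              (T (m+(p+1)) * descProd (fun n => (T n)⁻¹) m p))) := by
            rw [comm_head hcm2.eq]
        _ = ascProd T m p * (T (m+p) * (T (m+(p+1)) * ((T (m+p))⁻¹ *
              descProd (fun n => (T n)⁻¹) m p))) := by
            have e5 : m + (p + 1) = (m + p) + 1 := by omega
            rw [e5, braid_inv3' (hc.braid (m+p) (by omega) (by omega))]
        _ = ascProd T m (p+1+1) * descProd (fun n => (T n)⁻¹) m (p+1) := by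
            have e6 : ascProd T m (p+1+1) = ascProd T m p * T (m+p) * T (m+(p+1)) := by
              have : ascProd T m (p+1+1) = ascProd T m (p+1) * T (m + (p+1)) := rfl
              rw [this]
              rfl
            have e7 : descProd (fun n => (T n)⁻¹) m (p+1)
                = (T (m+p))⁻¹ * descProd (fun n => (T n)⁻¹) m p := rfl
            rw [e6, e7]; simp only [mul_assoc]

lemma BraidCtx.d2 {k : ℕ} {T : ℕ → G} (hc : BraidCtx G k T) {m : ℕ}
    (h1 : 1 ≤ m) (hmk : m ≤ k) :
    DD T k (m+1) * ascProd T 1 k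
      = ascProd T 1 k * descProd (fun n => (T n)⁻¹) m (k - m) := by
  have eD : DD T k (m+1) = descProd (fun n => (T n)⁻¹) (m+1) (k - m) := by
    unfold DD
    congr 1
    omega
  have hsplit := ascProd_add T 1 (m-1) ((k-m)+1)
  rw [show (m-1) + ((k-m)+1) = k by omega, show 1 + (m-1) = m by omega] at hsplit
  have hlow : Commute (descProd (fun n => (T n)⁻¹) (m+1) (k-m)) (ascProd T 1 (m-1)) := by
    apply commute_ascProd
    intro p hp hp2
    refine (commute_descProd ?_ : Commute (T p) _).symm
    intro q hq hq2
    have hco : Commute (T p) (T q) :=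
      hc.comm p q (by omega) (by omega) (by omega) (by omega) (Or.inl (by omega))
    exact hco.inv_right
  rw [eD, hsplit, ← mul_assoc, hlow.eq, mul_assoc, hc.CC h1 (k - m) (by omega), ← mul_assoc]

lemma BraidCtx.Ulem {k : ℕ} {T : ℕ → G} (hc : BraidCtx G k T) {m a a' : ℕ}
    (ha1 : 1 ≤ a') (ham : a' ≤ m) (hma : m ≤ a) (hak : a ≤ k) :
    DD T k m * (T m * ascProd (fun n => (T n)⁻¹) a' (a + 1 - a'))
      = ascProd (fun n => (T n)⁻¹) a' (a - a') * DD T k m := by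
  have hsplit : ascProd (fun n => (T n)⁻¹) a' (a + 1 - a')
      = ascProd (fun n => (T n)⁻¹) a' (m - a') *
          ((T m)⁻¹ * ascProd (fun n => (T n)⁻¹) (m+1) (a - m)) := by
    have e1 := ascProd_add (fun n => (T n)⁻¹) a' (m - a') ((a - m) + 1)
    rw [show (m - a') + ((a - m) + 1) = a + 1 - a' by omega,
      show a' + (m - a') = m by omega, ascProd_head] at e1
    exact e1
  have hlow : Commute (DD T k (m+1)) (ascProd (fun n => (T n)⁻¹) a' (m - a')) := by
    apply commute_ascProd
    intro p hp hp2
    exact (hc.commute_T_DD (by omega) (by omega) (by omega)).symm.inv_right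
  have e4 : ascProd (fun n => (T n)⁻¹) a' (m - a') * ascProd (fun n => (T n)⁻¹) m (a - m)
      = ascProd (fun n => (T n)⁻¹) a' (a - a') := by
    have e5 := ascProd_add (fun n => (T n)⁻¹) a' (m - a') (a - m)
    rw [show (m - a') + (a - m) = a - a' by omega,
      show a' + (m - a') = m by omega] at e5
    exact e5.symm
  calc DD T k m * (T m * ascProd (fun n => (T n)⁻¹) a' (a + 1 - a'))
      = DD T k (m+1) * (ascProd (fun n => (T n)⁻¹) a' (m - a') *
          ((T m)⁻¹ * ascProd (fun n => (T n)⁻¹) (m+1) (a - m))) := by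
        rw [hsplit, ← mul_assoc, DD_mul_T (by omega : m ≤ k)]
    _ = ascProd (fun n => (T n)⁻¹) a' (m - a') * ((DD T k (m+1) * (T m)⁻¹) *
          ascProd (fun n => (T n)⁻¹) (m+1) (a - m)) := by
        rw [comm_head hlow.eq]; simp only [mul_assoc]
    _ = ascProd (fun n => (T n)⁻¹) a' (m - a') * (DD T k m *
          ascProd (fun n => (T n)⁻¹) (m+1) (a - m)) := by
        rw [DD_mul_Tinv (by omega : m ≤ k)]
    _ = ascProd (fun n => (T n)⁻¹) a' (m - a') *
          (ascProd (fun n => (T n)⁻¹) m (a - m) * DD T k m) := by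
        rw [hc.DD_conj_ascProd_Tinv (by omega) (le_refl m) (by omega)]
    _ = ascProd (fun n => (T n)⁻¹) a' (a - a') * DD T k m := by
        rw [← mul_assoc, e4]

lemma BraidCtx.dagger {k : ℕ} {T : ℕ → G} (hc : BraidCtx G k T) (y : ℕ → G)
    (hyT : ∀ i j, 1 ≤ i → i ≤ k + 1 → 1 ≤ j → j + 1 ≤ k + 1 → i ≠ j → i ≠ j + 1 →
      y i * T j = T j * y i)
    (hy : ∀ i, 1 ≤ i → i + 1 ≤ k + 1 → y (i + 1) = (T i)⁻¹ * y i * (T i)⁻¹)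
    {m a : ℕ} (h1 : 1 ≤ m) (hma : m ≤ a) (hak : a ≤ k) (hk : 1 ≤ k) :
    DD T k m * ytilde T y (k+1) (a+1) = ytilde T y k a * DD T k m := by
  have hd1 : down T (a+1) 1 = descProd T 1 a := by
    rw [down_eq (by omega)]
    norm_num
  have hu1 : up T 1 (k+1) = ascProd T 1 k := by
    rw [up_eq (by omega)]
    norm_num
  have hds1 : downStar T (k+1) (a+1) = descProd (fun n => (T n)⁻¹) (a+1) (k-a) := by
    rw [downStar_eq (by omega)]
    congr 1
    omega
  have hd0 : down T a 1 = descProd T 1 (a-1) := down_eq (by omega)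
  have hu0 : up T 1 k = ascProd T 1 (k-1) := up_eq (by omega)
  have hds0 : downStar T k a = descProd (fun n => (T n)⁻¹) a (k-a) := downStar_eq (by omega)
  have hyc : Commute (descProd (fun n => (T n)⁻¹) m (k-m)) (y (k+1)) := by
    refine (commute_descProd ?_ : Commute (y (k+1)) _).symm
    intro q hq hq2
    have hco : Commute (y (k+1)) (T q) :=
      hyT (k+1) q (by omega) (by omega) (by omega) (by omega) (by omega) (by omega)
    exact hco.inv_right
  have hyk : y (k+1) = (T k)⁻¹ * y k * (T k)⁻¹ := hy k hk (by omega)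
  have hUk : ∀ w : G, ascProd T 1 k * ((T k)⁻¹ * w) = ascProd T 1 (k-1) * w := by
    intro w
    have e : ascProd T 1 ((k-1)+1) = ascProd T 1 (k-1) * T (1+(k-1)) := rfl
    rw [show (k-1)+1 = k by omega, show 1+(k-1) = k by omega] at e
    rw [e, mul_assoc]
    simp
  have hDcons : ∀ w : G,
      (T k)⁻¹ * (descProd (fun n => (T n)⁻¹) m (k-m) * w) = DD T k m * w := by
    intro w
    rw [← mul_assoc, ← DD_cons (by omega : m ≤ k)]
  have hstar : DD T k m * descProd (fun n => (T n)⁻¹) (a+1) (k-a)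
      = descProd (fun n => (T n)⁻¹) a (k-a) * DD T k m :=
    hc.DD_conj_descProd_Tinv h1 hma (by omega)
  have hd1' := hc.d1 h1 hma hak
  have hd2' := hc.d2 h1 (by omega)
  unfold ytilde
  rw [hd1, hu1, hds1, hd0, hu0, hds0]
  simp only [mul_assoc]
  rw [← mul_assoc, hd1']
  simp only [mul_assoc]
  rw [← mul_assoc (DD T k (m+1)), hd2']
  simp only [mul_assoc]
  rw [comm_head hyc.eq, hyk]
  simp only [mul_assoc]
  rw [hDcons, hstar, hUk]

lemma BraidCtx.case_c_train {k : ℕ} {T : ℕ → G} (hc : BraidCtx G k T) {m a a' : ℕ}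
    (h1 : 1 ≤ m) (hma : m ≤ a) (hak : a ≤ k) (hma' : m ≤ a') (hak' : a' ≤ k) :
    DD T k m * upStar T (a'+1) (a+1) = upStar T a' a * DD T k m := by
  unfold upStar
  rcases le_or_gt a' a with h | h
  · rw [up_eq (by omega : a'+1 ≤ a+1), up_eq h,
      show (a+1)-(a'+1) = a - a' by omega]
    exact hc.DD_conj_ascProd_Tinv h1 hma' (by omega)
  · rw [up_eq' (by omega), up_eq' (by omega),
      show (a'+1)-(a+1) = a' - a by omega]
    exact hc.DD_conj_ascProd_Tinv_inv h1 hma (by omega)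

lemma BraidCtx.case_d_train {k : ℕ} {T : ℕ → G} (hc : BraidCtx G k T) {m a a' : ℕ}
    (ha1 : 1 ≤ a') (ham : a' ≤ m) (hma : m ≤ a) (hak : a ≤ k) :
    DD T k (m+1) * upStar T a' (a+1) = upStar T a' a * DD T k m := by
  unfold upStar
  rw [up_eq (by omega : a' ≤ a+1), up_eq (by omega : a' ≤ a),
    ← DD_mul_T (by omega : m ≤ k), mul_assoc]
  exact hc.Ulem ha1 ham hma hak

/- ## Combinatorial lemmas -/

lemma rankOf_eq_sum {k : ℕ} (v : Fin k → ℝ) (i : Fin k) :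
    rankOf v i = ∑ j : Fin k, if v j ≤ v i then 1 else 0 := by
  rw [rankOf, Finset.card_filter]

lemma rankOf_snoc_castSucc {k : ℕ} (u : Fin k → ℝ) (c : ℝ) (i : Fin k) :
    rankOf (Fin.snoc u c) (Fin.castSucc i)
      = rankOf u i + (if c ≤ u i then 1 else 0) := by
  rw [rankOf_eq_sum, rankOf_eq_sum, Fin.sum_univ_castSucc]
  simp [Fin.snoc_castSucc, Fin.snoc_last]

lemma rankOf_snoc_last {k : ℕ} (u : Fin k → ℝ) (c : ℝ) :
    rankOf (Fin.snoc u c) (Fin.last k)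
      = (Finset.univ.filter fun j => u j ≤ c).card + 1 := by
  rw [rankOf_eq_sum, Finset.card_filter, Fin.sum_univ_castSucc]
  simp [Fin.snoc_castSucc, Fin.snoc_last]

lemma filter_le_eq_filter_lt {k : ℕ} (u : Fin k → ℝ) (t : ℝ) (h : ∀ j, u j ≠ t) :
    (Finset.univ.filter fun j => u j ≤ t) = (Finset.univ.filter fun j => u j < t) := by
  apply Finset.filter_congr
  intro j _
  constructor
  · intro hle; exact lt_of_le_of_ne hle (h j)
  · exact le_of_lt

lemma rankOf_snoc_last_eq {k : ℕ} (u : Fin k → ℝ) (t : ℝ) (h : ∀ j, u j ≠ t) :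
    rankOf (Fin.snoc u t) (Fin.last k)
      = (Finset.univ.filter fun j => u j < t).card + 1 := by
  rw [rankOf_snoc_last, filter_le_eq_filter_lt u t h]

lemma cnt_update {k : ℕ} (t c : ℝ) (u : Fin k → ℝ) (i : Fin k) :
    (Finset.univ.filter fun j => Function.update u i c j < t).card
      + (if u i < t then 1 else 0)
    = (Finset.univ.filter fun j => u j < t).card + (if c < t then 1 else 0) := by
  rw [Finset.card_filter, Finset.card_filter,
    ← Finset.sum_erase_add _ _ (Finset.mem_univ i),
    ← Finset.sum_erase_add _ _ (Finset.mem_univ i)]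
  have h1 : ∀ j ∈ Finset.univ.erase i,
      (if Function.update u i c j < t then (1:ℕ) else 0) = (if u j < t then 1 else 0) := by
    intro j hj
    rw [Function.update_of_ne (Finset.ne_of_mem_erase hj)]
  rw [Finset.sum_congr rfl h1, Function.update_self]
  split_ifs <;> omega

lemma one_le_rankOf {k : ℕ} (v : Fin k → ℝ) (i : Fin k) : 1 ≤ rankOf v i :=
  Finset.card_pos.mpr ⟨i, Finset.mem_filter.mpr ⟨Finset.mem_univ i, le_refl _⟩⟩

lemma rankOf_le {k : ℕ} (v : Fin k → ℝ) (i : Fin k) : rankOf v i ≤ k := by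
  have := Finset.card_filter_le (Finset.univ : Finset (Fin k)) (fun j => v j ≤ v i)
  simpa [rankOf] using this

lemma cnt_le {k : ℕ} (t : ℝ) (v : Fin k → ℝ) :
    (Finset.univ.filter fun j => v j < t).card ≤ k := by
  have := Finset.card_filter_le (Finset.univ : Finset (Fin k)) (fun j => v j < t)
  simpa using this

lemma rankOf_le_cnt {k : ℕ} {v : Fin k → ℝ} {t : ℝ} {i : Fin k} (h : v i < t) :
    rankOf v i ≤ (Finset.univ.filter fun j => v j < t).card := by
  apply Finset.card_le_card
  intro j hj
  rw [Finset.mem_filter] at hj ⊢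
  exact ⟨hj.1, lt_of_le_of_lt hj.2 h⟩

lemma cnt_lt_rankOf {k : ℕ} {v : Fin k → ℝ} {t : ℝ} {i : Fin k} (h : t < v i) :
    (Finset.univ.filter fun j => v j < t).card + 1 ≤ rankOf v i := by
  have hsub : insert i (Finset.univ.filter fun j => v j < t)
      ⊆ (Finset.univ.filter fun j => v j ≤ v i) := by
    intro j hj
    rw [Finset.mem_insert] at hj
    rw [Finset.mem_filter]
    rcases hj with rfl | hj
    · exact ⟨Finset.mem_univ j, le_refl _⟩
    · rw [Finset.mem_filter] at hj
      exact ⟨hj.1, le_of_lt (lt_trans hj.2 h)⟩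
  have hnotmem : i ∉ (Finset.univ.filter fun j => v j < t) := by
    rw [Finset.mem_filter]
    intro hmem
    exact absurd hmem.2 (not_lt.mpr (le_of_lt h))
  have := Finset.card_le_card hsub
  rwa [Finset.card_insert_of_notMem hnotmem] at this

lemma moveAt_apply_self {k : ℕ} (t : ℝ) (u : Fin k → ℝ) (i : Fin k) :
    moveAt t u i i = nextPt t (u i) := Function.update_self i _ u

lemma moveAt_snoc {k : ℕ} (t : ℝ) (u : Fin k → ℝ) (i : Fin k) :
    moveAt t (Fin.snoc u t) (Fin.castSucc i) = Fin.snoc (moveAt t u i) t := by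
  unfold moveAt
  rw [Fin.snoc_castSucc]
  funext j
  induction j using Fin.lastCases with
  | last =>
      rw [Function.update_of_ne (Fin.castSucc_lt_last i).ne', Fin.snoc_last, Fin.snoc_last]
  | cast q =>
      rcases eq_or_ne q i with rfl | hqi
      · rw [Function.update_self, Fin.snoc_castSucc, Function.update_self]
      · rw [Function.update_of_ne (fun hc => hqi (Fin.castSucc_injective k hc)),
          Fin.snoc_castSucc, Fin.snoc_castSucc,
          Function.update_of_ne hqi]

lemma nextSeq_snoc {k : ℕ} (t : ℝ) (v : Fin k → ℝ) (L : List (Fin k)) :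
    nextSeq t (Fin.snoc v t) (L.map Fin.castSucc) = Fin.snoc (nextSeq t v L) t := by
  induction L with
  | nil => rfl
  | cons i rest ih =>
      simp only [List.map_cons]
      show moveAt t (nextSeq t (Fin.snoc v t) (rest.map Fin.castSucc)) (Fin.castSucc i) = _
      rw [ih, moveAt_snoc]
      rfl

lemma snoc_injective {k : ℕ} {v : Fin k → ℝ} {t : ℝ} (hv : Function.Injective v)
    (h : ∀ j, v j ≠ t) : Function.Injective (Fin.snoc v t) := by
  intro a b hab
  induction a using Fin.lastCases with
  | last =>
      induction b using Fin.lastCases with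
      | last => rfl
      | cast q =>
          rw [Fin.snoc_last, Fin.snoc_castSucc] at hab
          exact absurd hab.symm (h q)
  | cast p =>
      induction b using Fin.lastCases with
      | last =>
          rw [Fin.snoc_last, Fin.snoc_castSucc] at hab
          exact absurd hab (h p)
      | cast q =>
          rw [Fin.snoc_castSucc, Fin.snoc_castSucc] at hab
          rw [hv hab]

lemma admissible_snoc {k : ℕ} {t : ℝ} (v : Fin k → ℝ) (L : List (Fin k))
    (hadm : AdmissibleSeq t v L) (hnt : ∀ n, ∀ j : Fin k, nextSeq t v (L.drop n) j ≠ t) :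
    AdmissibleSeq t (Fin.snoc v t) (L.map Fin.castSucc) := by
  induction L with
  | nil => exact snoc_injective hadm (hnt 0)
  | cons i rest ih =>
      refine ⟨ih hadm.1 (fun n j => hnt (n+1) j), ?_, ?_⟩
      · rw [nextSeq_snoc, Fin.snoc_castSucc]
        exact hadm.2.1
      · rw [nextSeq_snoc, moveAt_snoc]
        exact snoc_injective hadm.2.2 (hnt 0)

lemma bmove_snoc {k : ℕ} (T y z : ℕ → G) (t : ℝ) (u : Fin k → ℝ) (i : Fin k) :
    bmove T y z t (Fin.snoc u t) (Fin.castSucc i) =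
      if u i < t then
        down T (rankOf (Fin.snoc (moveAt t u i) t) (Fin.castSucc i))
            (rankOf (Fin.snoc u t : Fin (k+1) → ℝ) (Fin.castSucc i)) *
          z (rankOf (Fin.snoc u t : Fin (k+1) → ℝ) (Fin.castSucc i))
      else
        upStar T (rankOf (Fin.snoc (moveAt t u i) t) (Fin.castSucc i))
            (rankOf (Fin.snoc u t : Fin (k+1) → ℝ) (Fin.castSucc i)) *
          ytilde T y (k+1) (rankOf (Fin.snoc u t : Fin (k+1) → ℝ) (Fin.castSucc i)) := by
  unfold bmove
  rw [moveAt_snoc, Fin.snoc_castSucc]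

lemma key_move {k : ℕ} (T y z : ℕ → G) (hc : BraidCtx G k T)
    (hyT : ∀ i j, 1 ≤ i → i ≤ k + 1 → 1 ≤ j → j + 1 ≤ k + 1 → i ≠ j → i ≠ j + 1 →
      y i * T j = T j * y i)
    (hzT : ∀ i j, 1 ≤ i → i ≤ k + 1 → 1 ≤ j → j + 1 ≤ k + 1 → i ≠ j → i ≠ j + 1 →
      z i * T j = T j * z i)
    (hy : ∀ i, 1 ≤ i → i + 1 ≤ k + 1 → y (i + 1) = (T i)⁻¹ * y i * (T i)⁻¹)
    (t : ℝ) (u : Fin k → ℝ) (i : Fin k)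
    (hu : ∀ j, u j ≠ t) (hw : ∀ j, moveAt t u i j ≠ t) :
    DD T k (rankOf (Fin.snoc (moveAt t u i) t) (Fin.last k)) *
      bmove T y z t (Fin.snoc u t) (Fin.castSucc i)
    = bmove T y z t u i * DD T k (rankOf (Fin.snoc u t : Fin (k+1) → ℝ) (Fin.last k)) := by
  have hk : 1 ≤ k := by have := i.isLt; omega
  have hmu : rankOf (Fin.snoc u t : Fin (k+1) → ℝ) (Fin.last k)
      = (Finset.univ.filter fun j => u j < t).card + 1 := rankOf_snoc_last_eq u t hu
  have hmw : rankOf (Fin.snoc (moveAt t u i) t) (Fin.last k)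
      = (Finset.univ.filter fun j => moveAt t u i j < t).card + 1 :=
    rankOf_snoc_last_eq (moveAt t u i) t hw
  have hcux : (Finset.univ.filter fun j => u j < t).card ≤ k := cnt_le t u
  have hA : rankOf (Fin.snoc u t : Fin (k+1) → ℝ) (Fin.castSucc i)
      = rankOf u i + (if t ≤ u i then 1 else 0) := rankOf_snoc_castSucc u t i
  have hA' : rankOf (Fin.snoc (moveAt t u i) t) (Fin.castSucc i)
      = rankOf (moveAt t u i) i + (if t ≤ moveAt t u i i then 1 else 0) :=
    rankOf_snoc_castSucc (moveAt t u i) t i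
  have hcnt : (Finset.univ.filter fun j => moveAt t u i j < t).card
        + (if u i < t then 1 else 0)
      = (Finset.univ.filter fun j => u j < t).card
        + (if moveAt t u i i < t then 1 else 0) := by
    rw [moveAt_apply_self t u i]
    exact cnt_update t (nextPt t (u i)) u i
  have ha1 : 1 ≤ rankOf u i := one_le_rankOf u i
  have ha'1 : 1 ≤ rankOf (moveAt t u i) i := one_le_rankOf (moveAt t u i) i
  have hak : rankOf u i ≤ k := rankOf_le u i
  have ha'k : rankOf (moveAt t u i) i ≤ k := rankOf_le (moveAt t u i) i
  rw [bmove_snoc]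
  unfold bmove
  rw [hmu, hmw, hA, hA']
  rcases lt_or_gt_of_ne (hu i) with hui | hui
  · rcases lt_or_gt_of_ne (hw i) with hwi | hwi
    · -- case (a) : below t, stays below t
      have hcc : (Finset.univ.filter fun j => moveAt t u i j < t).card
          = (Finset.univ.filter fun j => u j < t).card := by
        rw [if_pos hui, if_pos hwi] at hcnt
        omega
      rw [if_pos hui, if_pos hui, if_neg (not_le.mpr hui), if_neg (not_le.mpr hwi),
        add_zero, add_zero, hcc]
      have hacu : rankOf u i ≤ (Finset.univ.filter fun j => u j < t).card :=
        rankOf_le_cnt hui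
      have ha'cu : rankOf (moveAt t u i) i ≤ (Finset.univ.filter fun j => u j < t).card := by
        have := rankOf_le_cnt hwi
        omega
      have hdown : Commute (DD T k ((Finset.univ.filter fun j => u j < t).card + 1))
          (down T (rankOf (moveAt t u i) i) (rankOf u i)) := by
        unfold down
        split_ifs with hcase
        · apply commute_descProd
          intro p hp hp2
          exact (hc.commute_T_DD (by omega) (by omega) (by omega)).symm
        · apply Commute.inv_right
          apply commute_descProd
          intro p hp hp2
          exact (hc.commute_T_DD (by omega) (by omega) (by omega)).symm
      have hzc : Commute (DD T k ((Finset.univ.filter fun j => u j < t).card + 1))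
          (z (rankOf u i)) := by
        refine Commute.symm (commute_descProd ?_ :
          Commute (z (rankOf u i)) (DD T k ((Finset.univ.filter fun j => u j < t).card + 1)))
        intro q hq hq2
        have hco : Commute (z (rankOf u i)) (T q) :=
          hzT (rankOf u i) q (by omega) (by omega) (by omega) (by omega) (by omega) (by omega)
        exact hco.inv_right
      exact (hdown.mul_right hzc).eq
    · -- case (b) : below t, goes above t
      have hcc : (Finset.univ.filter fun j => moveAt t u i j < t).card + 1
          = (Finset.univ.filter fun j => u j < t).card := by
        rw [if_pos hui, if_neg (not_lt.mpr (le_of_lt hwi))] at hcnt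
        omega
      rw [if_pos hui, if_pos hui, if_neg (not_le.mpr hui), if_pos (le_of_lt hwi),
        add_zero, hcc]
      have hacu : rankOf u i ≤ (Finset.univ.filter fun j => u j < t).card :=
        rankOf_le_cnt hui
      have hcua' : (Finset.univ.filter fun j => u j < t).card ≤ rankOf (moveAt t u i) i := by
        have := cnt_lt_rankOf hwi
        omega
      rw [down_eq (by omega : rankOf u i ≤ rankOf (moveAt t u i) i + 1),
        down_eq (by omega : rankOf u i ≤ rankOf (moveAt t u i) i)]
      exact hc.case_b z hzT ha1 hacu hcua' ha'k
  · rcases lt_or_gt_of_ne (hw i) with hwi | hwi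
    · -- case (d) : above t, goes below t
      have hcc : (Finset.univ.filter fun j => moveAt t u i j < t).card
          = (Finset.univ.filter fun j => u j < t).card + 1 := by
        rw [if_neg (not_lt.mpr (le_of_lt hui)), if_pos hwi] at hcnt
        omega
      rw [if_neg (not_lt.mpr (le_of_lt hui)), if_neg (not_lt.mpr (le_of_lt hui)),
        if_pos (le_of_lt hui), if_neg (not_le.mpr hwi), add_zero, hcc]
      have hma : (Finset.univ.filter fun j => u j < t).card + 1 ≤ rankOf u i :=
        cnt_lt_rankOf hui
      have ha'c : rankOf (moveAt t u i) i
          ≤ (Finset.univ.filter fun j => u j < t).card + 1 := by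
        have := rankOf_le_cnt hwi
        omega
      rw [← mul_assoc, hc.case_d_train ha'1 ha'c hma hak, mul_assoc,
        hc.dagger y hyT hy (by omega) hma hak hk, ← mul_assoc]
    · -- case (c) : above t, stays above t
      have hcc : (Finset.univ.filter fun j => moveAt t u i j < t).card
          = (Finset.univ.filter fun j => u j < t).card := by
        rw [if_neg (not_lt.mpr (le_of_lt hui)), if_neg (not_lt.mpr (le_of_lt hwi))] at hcnt
        omega
      rw [if_neg (not_lt.mpr (le_of_lt hui)), if_neg (not_lt.mpr (le_of_lt hui)),
        if_pos (le_of_lt hui), if_pos (le_of_lt hwi), hcc]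
      have hma : (Finset.univ.filter fun j => u j < t).card + 1 ≤ rankOf u i :=
        cnt_lt_rankOf hui
      have hma' : (Finset.univ.filter fun j => u j < t).card + 1
          ≤ rankOf (moveAt t u i) i := by
        have := cnt_lt_rankOf hwi
        omega
      rw [← mul_assoc, hc.case_c_train (by omega) hma hak hma' ha'k, mul_assoc,
        hc.dagger y hyT hy (by omega) hma hak hk, ← mul_assoc]

end SBCP

/-- Adjoining a stationary strand at the corner point `t` transforms the special braid by
the homomorphism `φ₋` fixing the generators: with `i`, `i′` the ranks of `t` in the initial
and final tuples, `T*_{k+1↘i′} · B⁽ᵏ⁺¹⁾(v′; i⃗) = B⁽ᵏ⁾(v; i⃗) · T*_{k+1↘i}`. -/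
theorem specialBraid_snoc_corner_point (k : ℕ) (T y z : ℕ → G)
    (hbraid : ∀ i, 1 ≤ i → i + 2 ≤ k + 1 →
      T i * T (i + 1) * T i = T (i + 1) * T i * T (i + 1))
    (hcomm : ∀ i j, 1 ≤ i → i + 1 ≤ k + 1 → 1 ≤ j → j + 1 ≤ k + 1 →
      (i + 1 < j ∨ j + 1 < i) → T i * T j = T j * T i)
    (hyT : ∀ i j, 1 ≤ i → i ≤ k + 1 → 1 ≤ j → j + 1 ≤ k + 1 → i ≠ j → i ≠ j + 1 →
      y i * T j = T j * y i)
    (hzT : ∀ i j, 1 ≤ i → i ≤ k + 1 → 1 ≤ j → j + 1 ≤ k + 1 → i ≠ j → i ≠ j + 1 →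
      z i * T j = T j * z i)
    (hy : ∀ i, 1 ≤ i → i + 1 ≤ k + 1 → y (i + 1) = (T i)⁻¹ * y i * (T i)⁻¹)
    (hz : ∀ i, 1 ≤ i → i + 1 ≤ k + 1 → z (i + 1) = T i * z i * T i)
    (hyy : ∀ i j, 1 ≤ i → i ≤ k + 1 → 1 ≤ j → j ≤ k + 1 → y i * y j = y j * y i)
    (hzz : ∀ i j, 1 ≤ i → i ≤ k + 1 → 1 ≤ j → j ≤ k + 1 → z i * z j = z j * z i)
    (hmix : 2 ≤ k + 1 → z 1 * T 1 * y 1 * (T 1)⁻¹ = (T 1)⁻¹ * y 1 * (T 1)⁻¹ * z 1)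
    (s t : ℝ) (hs : 0 < s) (ht : t = 1 / (s + 1))
    (v : Fin k → ℝ) (hv : ∀ i, 0 < v i ∧ v i < 1) (hvt : ∀ i, v i ≠ t)
    (L : List (Fin k))
    (hadm : AdmissibleSeq t v L)
    (hnt : ∀ n, ∀ j : Fin k, nextSeq t v (L.drop n) j ≠ t) :
    AdmissibleSeq t (Fin.snoc v t) (L.map Fin.castSucc) ∧
    downStar T (k + 1)
        (rankOf (nextSeq t (Fin.snoc v t) (L.map Fin.castSucc)) (Fin.last k)) *
      specialBraid T y z t (Fin.snoc v t) (L.map Fin.castSucc) =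
    specialBraid T y z t v L *
      downStar T (k + 1) (rankOf (Fin.snoc v t : Fin (k+1) → ℝ) (Fin.last k)) := by
  have hc : SBCP.BraidCtx G k T := ⟨hbraid, hcomm⟩
  constructor
  · exact SBCP.admissible_snoc v L hadm hnt
  · have main : ∀ (L' : List (Fin k)), AdmissibleSeq t v L' →
        (∀ n, ∀ j : Fin k, nextSeq t v (L'.drop n) j ≠ t) →
        SBCP.DD T k (rankOf (Fin.snoc (nextSeq t v L') t) (Fin.last k)) *
          specialBraid T y z t (Fin.snoc v t) (L'.map Fin.castSucc)
        = specialBraid T y z t v L' *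
          SBCP.DD T k (rankOf (Fin.snoc v t : Fin (k+1) → ℝ) (Fin.last k)) := by
      intro L'
      induction L' with
      | nil =>
          intro _ _
          simp only [List.map_nil, specialBraid, nextSeq, mul_one, one_mul]
      | cons i rest ih =>
          intro hadm' hnt'
          have hu : ∀ j, nextSeq t v rest j ≠ t := fun j => hnt' 1 j
          have hw : ∀ j, moveAt t (nextSeq t v rest) i j ≠ t := fun j => hnt' 0 j
          have hns : nextSeq t v (i :: rest) = moveAt t (nextSeq t v rest) i := rfl
          simp only [List.map_cons, specialBraid]
          rw [SBCP.nextSeq_snoc, hns, ← mul_assoc,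
            SBCP.key_move T y z hc hyT hzT hy t (nextSeq t v rest) i hu hw,
            mul_assoc, ih hadm'.1 (fun n j => hnt' (n+1) j), ← mul_assoc]
    rw [SBCP.downStar_eq_DD (SBCP.rankOf_le _ _), SBCP.downStar_eq_DD (SBCP.rankOf_le _ _),
      SBCP.nextSeq_snoc]
    exact main L hadm hnt
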